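/- (Lemma 1) Let u₁ and u₂ be Schwartz eigenfunctions of the PT-symmetric Schrödinger operator L with real eigenvalues μ₁ and μ₂ respectively, i.e. u₁'' + V·u₁ = -μ₁·u₁ and u₂'' + V·u₂ = -μ₂·u₂, where μ₁, μ₂ ∈ ℝ. If μ₁ ≠ μ₂, then ⟨u₁, u₂⟩_PT = 0. -/

import Mathlib

open MeasureTheory Complex

/-- The PT-product `⟨f,g⟩_PT = ∫_ℝ conj(f(-x))·g(x) dx`. -/
noncomputable def PTprod (f g : ℝ → ℂ) : ℂ :=
  ∫ x : ℝ, (starRingEnd ℂ) (f (-x)) * g x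

private lemma PT_aux_integrable (f g : SchwartzMap ℝ ℂ) :
    Integrable (fun x : ℝ => (starRingEnd ℂ) (f (-x)) * g x) := by
  refine (g.integrable (μ := volume)).bdd_mul (c := SchwartzMap.seminorm ℝ 0 0 f) ?_ (Filter.Eventually.of_forall fun x => ?_)
  · exact (Complex.continuous_conj.comp (f.continuous.comp continuous_neg)).aestronglyMeasurable
  · simpa using f.norm_le_seminorm ℝ (-x)

private lemma PT_aux_hasDerivAt (f : SchwartzMap ℝ ℂ) (x : ℝ) :
    HasDerivAt (fun x : ℝ => (starRingEnd ℂ) (f (-x)))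
      (-(starRingEnd ℂ) (deriv f (-x))) x := by
  have h1 : HasDerivAt (fun x : ℝ => f (-x)) (-(deriv f (-x))) x := by
    have hf : HasDerivAt f (deriv f (-x)) (-x) := f.differentiableAt.hasDerivAt
    have hneg : HasDerivAt (fun x : ℝ => -x) (-1 : ℝ) x := by simpa using (hasDerivAt_neg x)
    simpa [Function.comp_def] using HasDerivAt.scomp (h := fun x : ℝ => -x) x hf hneg
  have hL : HasDerivAt (fun x : ℝ => (Complex.conjCLE : ℂ →L[ℝ] ℂ) ((fun x : ℝ => f (-x)) x))
      ((Complex.conjCLE : ℂ →L[ℝ] ℂ) (-(deriv f (-x)))) x :=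
    ((Complex.conjCLE : ℂ →L[ℝ] ℂ).hasFDerivAt).comp_hasDerivAt x h1
  simpa using hL

theorem PT_orthogonality (V : ℝ → ℂ) (hVcont : Continuous V)
    (hVbdd : ∃ C : ℝ, ∀ x : ℝ, ‖V x‖ ≤ C)
    (hVPT : ∀ x : ℝ, (starRingEnd ℂ) (V (-x)) = V x)
    (μ₁ μ₂ : ℝ) (u₁ u₂ : SchwartzMap ℝ ℂ)
    (hu₁ : ∀ x : ℝ, deriv (deriv u₁) x + V x * u₁ x = -(μ₁ : ℂ) * u₁ x)
    (hu₂ : ∀ x : ℝ, deriv (deriv u₂) x + V x * u₂ x = -(μ₂ : ℂ) * u₂ x)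
    (hne : μ₁ ≠ μ₂) :
    PTprod (fun x => u₁ x) (fun x => u₂ x) = 0 := by
  classical
  set a₁ : SchwartzMap ℝ ℂ := SchwartzMap.derivCLM ℝ ℂ u₁ with ha₁
  set a₂ : SchwartzMap ℝ ℂ := SchwartzMap.derivCLM ℝ ℂ a₁ with ha₂
  set b₁ : SchwartzMap ℝ ℂ := SchwartzMap.derivCLM ℝ ℂ u₂ with hb₁
  set b₂ : SchwartzMap ℝ ℂ := SchwartzMap.derivCLM ℝ ℂ b₁ with hb₂
  have ha₁' : ∀ x, a₁ x = deriv u₁ x := fun x => SchwartzMap.derivCLM_apply ℝ u₁ x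
  have ha₂' : ∀ x, a₂ x = deriv (deriv u₁) x := by
    intro x
    have : (⇑a₁ : ℝ → ℂ) = deriv u₁ := funext ha₁'
    rw [SchwartzMap.derivCLM_apply, this]
  have hb₁' : ∀ x, b₁ x = deriv u₂ x := fun x => SchwartzMap.derivCLM_apply ℝ u₂ x
  have hb₂' : ∀ x, b₂ x = deriv (deriv u₂) x := by
    intro x
    have : (⇑b₁ : ℝ → ℂ) = deriv u₂ := funext hb₁'
    rw [SchwartzMap.derivCLM_apply, this]
  -- the PT-reflected conjugate of u₁ and its derivatives
  set w : ℝ → ℂ := fun x => (starRingEnd ℂ) (u₁ (-x)) with hw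
  set w' : ℝ → ℂ := fun x => -(starRingEnd ℂ) (a₁ (-x)) with hw'
  set w'' : ℝ → ℂ := fun x => (starRingEnd ℂ) (a₂ (-x)) with hw''
  have hdw : ∀ x, HasDerivAt w (w' x) x := by
    intro x
    simpa [hw', ha₁'] using PT_aux_hasDerivAt u₁ x
  have hdw' : ∀ x, HasDerivAt w' (w'' x) x := by
    intro x
    have := (PT_aux_hasDerivAt a₁ x).neg
    have e : (⇑a₁ : ℝ → ℂ) = deriv u₁ := funext ha₁'
    simpa [hw', hw'', ha₂', e, Pi.neg_def] using this
  have hdu₂ : ∀ x, HasDerivAt (⇑u₂) (b₁ x) x := by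
    intro x; rw [hb₁']; exact u₂.differentiableAt.hasDerivAt
  have hdb₁ : ∀ x, HasDerivAt (⇑b₁) (b₂ x) x := by
    intro x; rw [hb₂']
    have : HasDerivAt (deriv (⇑u₂)) (deriv (deriv (⇑u₂)) x) x := by
      have : (⇑b₁ : ℝ → ℂ) = deriv u₂ := funext hb₁'
      rw [← this]; exact b₁.differentiableAt.hasDerivAt
    have heq : (⇑b₁ : ℝ → ℂ) = deriv u₂ := funext hb₁'
    rw [heq]; exact this
  -- integrabilities
  have Iww : Integrable (fun x => w x * u₂ x) := PT_aux_integrable u₁ u₂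
  have I1 : Integrable (fun x => w x * b₁ x) := PT_aux_integrable u₁ b₁
  have I2 : Integrable (fun x => w x * b₂ x) := PT_aux_integrable u₁ b₂
  have I3 : Integrable (fun x => w' x * u₂ x) := by
    simp only [hw', neg_mul]
    exact (PT_aux_integrable a₁ u₂).neg
  have I4 : Integrable (fun x => w' x * b₁ x) := by
    simp only [hw', neg_mul]
    exact (PT_aux_integrable a₁ b₁).neg
  have I5 : Integrable (fun x => w'' x * u₂ x) := PT_aux_integrable a₂ u₂
  -- integration by parts twice
  have ibp1 : ∫ x : ℝ, w x * b₂ x = -∫ x : ℝ, w' x * b₁ x := by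
    exact integral_mul_deriv_eq_deriv_mul_of_integrable (fun x _ => hdw x) (fun x _ => hdb₁ x) I2 I4 I1
  have ibp2 : ∫ x : ℝ, w' x * b₁ x = -∫ x : ℝ, w'' x * u₂ x := by
    exact integral_mul_deriv_eq_deriv_mul_of_integrable (fun x _ => hdw' x) (fun x _ => hdu₂ x) I4 I5 I3
  have ibp : ∫ x : ℝ, w x * b₂ x = ∫ x : ℝ, w'' x * u₂ x := by
    rw [ibp1, ibp2, neg_neg]
  -- eigen-equation for w
  have hweq : ∀ x, w'' x + V x * w x = -(μ₁ : ℂ) * w x := by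
    intro x
    have h := congrArg (starRingEnd ℂ) (hu₁ (-x))
    simp only [map_add, map_mul, map_neg, Complex.conj_ofReal, hVPT x] at h
    have hx2 : w'' x = (starRingEnd ℂ) (deriv (deriv u₁) (-x)) := by
      simp [hw'', ha₂']
    rw [hx2, hw]
    simpa using h
  -- pointwise identity
  have key : ∀ x, w'' x * u₂ x - w x * b₂ x = ((μ₂ : ℂ) - μ₁) * (w x * u₂ x) := by
    intro x
    have h1 := hweq x
    have h2 := hu₂ x
    rw [hb₂' x]
    have e1 : w'' x = -(μ₁ : ℂ) * w x - V x * w x := by linear_combination h1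
    have e2 : deriv (deriv u₂) x = -(μ₂ : ℂ) * u₂ x - V x * u₂ x := by linear_combination h2
    rw [e1, e2]; ring
  -- conclude
  have hzero : ((μ₂ : ℂ) - μ₁) * (∫ x : ℝ, w x * u₂ x) = 0 := by
    rw [← integral_const_mul]
    have : ∫ x : ℝ, ((μ₂ : ℂ) - μ₁) * (w x * u₂ x)
        = ∫ x : ℝ, (w'' x * u₂ x - w x * b₂ x) := by
      congr 1; funext x; rw [key x]
    rw [this, integral_sub I5 I2, ibp, sub_self]
  have hμ : ((μ₂ : ℂ) - μ₁) ≠ 0 :=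
    sub_ne_zero.mpr (fun h => hne (Complex.ofReal_inj.mp h).symm)
  have := mul_eq_zero.mp hzero
  rcases this with h | h
  · exact absurd h hμ
  · simpa [PTprod, hw] using h
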